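/- arXiv:math/0405181 — 2 statements merged into one kernel-verified Lean document; each statement's English description precedes it below -/
import Mathlib

section
/- Let D be a positive digraph with at least one edge, n vertices, and q edges. Then the polytope P_D of magic labelings of D is an integral polytope (every vertex of P_D has integer coordinates) of dimension q - 2n + b, where b is the number of connected components of the associated bipartite graph G_D. -/
open Finset Matrix

set_option linter.unusedSectionVars false
set_option maxHeartbeats 1000000
set_option synthInstance.maxHeartbeats 400000

variable {V : Type*} [Fintype V] [DecidableEq V]

/-- A magic labeling of the digraph with vertex set `V` and edge set `E ⊆ V × V`,
of magic sum `r`. -/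
def IsMagicD (E : Finset (V × V)) (L : V × V → ℕ) (r : ℕ) : Prop :=
  (∀ e, e ∉ E → L e = 0) ∧ (∀ v : V, ∑ e ∈ E with e.1 = v, L e = r) ∧
    (∀ v : V, ∑ e ∈ E with e.2 = v, L e = r)

/-- A positive digraph: for every edge `e` there is a magic labeling `L` of the digraph
with `L e > 0` (equivalently, the associated bipartite graph `G_D` is positive). -/
def IsPositiveD (E : Finset (V × V)) : Prop :=
  ∀ e ∈ E, ∃ (L : V × V → ℕ) (r : ℕ), IsMagicD E L r ∧ 0 < L e

/-- The polytope `P_D` of magic labelings of the digraph with edge set `E`: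
assignments of nonnegative reals to the edges such that at every vertex the labels
of the outgoing edges sum to `1` and the labels of the incoming edges sum to `1`. -/
def PD (E : Finset (V × V)) : Set (V × V → ℝ) :=
  {x | (∀ e, e ∉ E → x e = 0) ∧ (∀ e, 0 ≤ x e) ∧
    (∀ v : V, ∑ e ∈ E with e.1 = v, x e = 1) ∧ (∀ v : V, ∑ e ∈ E with e.2 = v, x e = 1)}

/-- The edge set of the bipartite graph `G_D` associated to the digraph with edge set `E`. -/
def EGD (E : Finset (V × V)) : Finset (Sym2 (V ⊕ V)) :=
  E.image (fun p => s(Sum.inl p.1, Sum.inr p.2))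

/-- The simple graph used to define the connected components of `G_D`. -/
def compGraphGD (E : Finset (V × V)) : SimpleGraph (V ⊕ V) :=
  SimpleGraph.fromRel (fun u v => s(u, v) ∈ EGD E)

section AuxSupp

set_option linter.unusedSectionVars false in
/-- Submodule of functions supported on `S`. -/
def suppSub {ι : Type*} [Fintype ι] [DecidableEq ι] (S : Finset ι) :
    Submodule ℝ (ι → ℝ) where
  carrier := {x | ∀ i ∉ S, x i = 0}
  add_mem' := by intro a b ha hb i hi; simp [ha i hi, hb i hi]
  zero_mem' := by intro i _; rfl
  smul_mem' := by intro c a ha i hi; simp [ha i hi]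

lemma mem_suppSub {ι : Type*} [Fintype ι] [DecidableEq ι] {S : Finset ι} {x : ι → ℝ} :
    x ∈ suppSub S ↔ ∀ i ∉ S, x i = 0 := Iff.rfl

noncomputable def suppSubEquiv {ι : Type*} [Fintype ι] [DecidableEq ι] (S : Finset ι) :
    suppSub S ≃ₗ[ℝ] (S → ℝ) where
  toFun x := fun i => x.1 i
  map_add' a b := rfl
  map_smul' c a := rfl
  invFun f := ⟨fun i => if h : i ∈ S then f ⟨i, h⟩ else 0, by intro i hi; simp [hi]⟩
  left_inv x := by
    ext i
    by_cases h : i ∈ S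
    · simp [h]
    · simp [h, x.2 i h]
  right_inv f := by ext i; simp [i.2]

lemma finrank_suppSub {ι : Type*} [Fintype ι] [DecidableEq ι] (S : Finset ι) :
    Module.finrank ℝ (suppSub S) = S.card := by
  rw [(suppSubEquiv S).finrank_eq, Module.finrank_pi, Fintype.card_coe]

end AuxSupp

/-- Vertex–edge incidence matrix of the digraph (rows: `inl v` = out-vertex constraints,
`inr v` = in-vertex constraints). -/
def Mmat (E : Finset (V × V)) : Matrix (V ⊕ V) (V × V) ℝ :=
  fun u e => if (u = Sum.inl e.1 ∨ u = Sum.inr e.2) ∧ e ∈ E then 1 else 0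

lemma Mmat_inl (E : Finset (V × V)) (v : V) (e : V × V) :
    Mmat E (Sum.inl v) e = if e ∈ E ∧ e.1 = v then 1 else 0 := by
  unfold Mmat
  by_cases h1 : e ∈ E <;> by_cases h2 : e.1 = v <;> simp_all [eq_comm]

lemma Mmat_inr (E : Finset (V × V)) (v : V) (e : V × V) :
    Mmat E (Sum.inr v) e = if e ∈ E ∧ e.2 = v then 1 else 0 := by
  unfold Mmat
  by_cases h1 : e ∈ E <;> by_cases h2 : e.2 = v <;> simp_all [eq_comm]

lemma mulVec_inl (E : Finset (V × V)) (x : V × V → ℝ) (v : V) :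
    (Mmat E).mulVec x (Sum.inl v) = ∑ e ∈ E with e.1 = v, x e := by
  rw [Matrix.mulVec, dotProduct]
  simp only [Mmat_inl, ite_mul, one_mul, zero_mul]
  rw [Finset.sum_ite, Finset.sum_const_zero, add_zero]
  apply Finset.sum_congr _ (fun _ _ => rfl)
  ext e; simp [and_comm]

lemma mulVec_inr (E : Finset (V × V)) (x : V × V → ℝ) (v : V) :
    (Mmat E).mulVec x (Sum.inr v) = ∑ e ∈ E with e.2 = v, x e := by
  rw [Matrix.mulVec, dotProduct]
  simp only [Mmat_inr, ite_mul, one_mul, zero_mul]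
  rw [Finset.sum_ite, Finset.sum_const_zero, add_zero]
  apply Finset.sum_congr _ (fun _ _ => rfl)
  ext e; simp [and_comm]

lemma mulVec_congr_support {F E : Finset (V × V)} (hFE : F ⊆ E) (x : V × V → ℝ)
    (hx : ∀ e ∉ F, x e = 0) : (Mmat E).mulVec x = (Mmat F).mulVec x := by
  funext u
  rw [Matrix.mulVec, Matrix.mulVec, dotProduct, dotProduct]
  refine Finset.sum_congr rfl fun e _ => ?_
  by_cases he : e ∈ F
  · have : Mmat E u e = Mmat F u e := by
      unfold Mmat; simp [he, hFE he]
    rw [this]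
  · rw [hx e he, mul_zero, mul_zero]

lemma transpose_mulVec (E : Finset (V × V)) (y : (V ⊕ V) → ℝ) (e : V × V) :
    (Mmat E)ᵀ.mulVec y e = if e ∈ E then y (Sum.inl e.1) + y (Sum.inr e.2) else 0 := by
  rw [Matrix.mulVec, dotProduct]
  rw [Fintype.sum_sum_type]
  simp only [Matrix.transpose_apply, Mmat_inl, Mmat_inr, ite_mul, one_mul, zero_mul]
  by_cases he : e ∈ E
  · simp only [he, true_and]
    rw [Finset.sum_ite_eq Finset.univ e.1 (fun v => y (Sum.inl v)),
      Finset.sum_ite_eq Finset.univ e.2 (fun v => y (Sum.inr v))]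
    simp [he]
  · simp [he]

/-- The "left kernel" space of the incidence matrix. -/
def Yd (E : Finset (V × V)) : Submodule ℝ ((V ⊕ V) → ℝ) where
  carrier := {y | ∀ e ∈ E, y (Sum.inl e.1) + y (Sum.inr e.2) = 0}
  add_mem' := by
    intro a b ha hb e he
    have := ha e he; have := hb e he
    simp only [Pi.add_apply]; linarith
  zero_mem' := by intro e he; simp
  smul_mem' := by
    intro c a ha e he
    simp only [Pi.smul_apply, smul_eq_mul]
    rw [← mul_add, ha e he, mul_zero]

lemma mem_Yd {E : Finset (V × V)} {y : (V ⊕ V) → ℝ} :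
    y ∈ Yd E ↔ ∀ e ∈ E, y (Sum.inl e.1) + y (Sum.inr e.2) = 0 := Iff.rfl

/-- sign function: +1 on `inl`, -1 on `inr`. -/
def sgn : V ⊕ V → ℝ := Sum.elim (fun _ => 1) (fun _ => -1)

lemma adj_of_mem {E : Finset (V × V)} {e : V × V} (he : e ∈ E) :
    (compGraphGD E).Adj (Sum.inl e.1) (Sum.inr e.2) := by
  rw [compGraphGD, SimpleGraph.fromRel_adj]
  exact ⟨by simp, Or.inl (Finset.mem_image_of_mem _ he)⟩

lemma sgn_mul_eq_of_adj {E : Finset (V × V)} {y : (V ⊕ V) → ℝ} (hy : y ∈ Yd E)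
    {u w : V ⊕ V} (h : (compGraphGD E).Adj u w) : sgn u * y u = sgn w * y w := by
  rw [compGraphGD, SimpleGraph.fromRel_adj] at h
  obtain ⟨-, h⟩ := h
  have h' : s(u, w) ∈ EGD E := by
    rcases h with h | h
    · exact h
    · rwa [Sym2.eq_swap]
  rw [EGD, Finset.mem_image] at h'
  obtain ⟨e, he, hs⟩ := h'
  have hsum := hy e he
  rw [Sym2.eq_iff] at hs
  rcases hs with ⟨h1, h2⟩ | ⟨h1, h2⟩ <;> subst h1 <;> subst h2 <;> simp [sgn] <;> linarith

noncomputable def toYd (E : Finset (V × V)) :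
    ((compGraphGD E).ConnectedComponent → ℝ) →ₗ[ℝ] Yd E where
  toFun f := ⟨fun u => sgn u * f ((compGraphGD E).connectedComponentMk u), by
    intro e he
    have hc := SimpleGraph.ConnectedComponent.connectedComponentMk_eq_of_adj (adj_of_mem he)
    simp only [hc, sgn, Sum.elim_inl, Sum.elim_inr]
    ring⟩
  map_add' a b := by ext u; simp [mul_add]
  map_smul' c a := by ext u; simp; ring

lemma toYd_bijective (E : Finset (V × V)) : Function.Bijective (toYd E) := by
  constructor
  · intro f g hfg
    funext c
    obtain ⟨u, rfl⟩ := c.exists_rep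
    have := congrFun (congrArg (fun (y : Yd E) => (y : (V ⊕ V) → ℝ)) hfg) u
    simp only [toYd, LinearMap.coe_mk, AddHom.coe_mk] at this
    cases u <;> (simp [sgn] at this; exact this)
  · rintro ⟨y, hy⟩
    have hwalk0 : ∀ (u w : V ⊕ V) (p : (compGraphGD E).Walk u w),
        sgn u * y u = sgn w * y w := by
      intro u w p
      induction p with
      | nil => rfl
      | cons h p ih => exact (sgn_mul_eq_of_adj hy h).trans ih
    refine ⟨SimpleGraph.ConnectedComponent.lift (fun u => sgn u * y u)
      (fun u w p _ => hwalk0 u w p), ?_⟩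
    ext u
    simp only [toYd, LinearMap.coe_mk, AddHom.coe_mk,
      SimpleGraph.ConnectedComponent.lift_mk]
    cases u <;> simp [sgn]

noncomputable instance (E : Finset (V × V)) :
    Fintype ((compGraphGD E).ConnectedComponent) := Fintype.ofFinite _

lemma finrank_Yd (E : Finset (V × V)) :
    Module.finrank ℝ (Yd E) = Nat.card (compGraphGD E).ConnectedComponent := by
  rw [← (LinearEquiv.ofBijective (toYd E) (toYd_bijective E)).finrank_eq,
    Module.finrank_pi, Nat.card_eq_fintype_card]

lemma ker_transpose (E : Finset (V × V)) :
    LinearMap.ker ((Mmat E)ᵀ).mulVecLin = Yd E := by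
  ext y
  simp only [LinearMap.mem_ker, mem_Yd]
  constructor
  · intro h e he
    have h' := congrFun h e
    rw [Matrix.mulVecLin_apply, transpose_mulVec, if_pos he] at h'
    exact h'
  · intro h
    funext e
    rw [Matrix.mulVecLin_apply, transpose_mulVec]
    by_cases he : e ∈ E
    · rw [if_pos he]; exact h e he
    · rw [if_neg he]; rfl

lemma rank_Mmat_add (E : Finset (V × V)) :
    (Mmat E).rank + Module.finrank ℝ (Yd E) = 2 * Fintype.card V := by
  have h := LinearMap.finrank_range_add_finrank_ker ((Mmat E)ᵀ).mulVecLin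
  rw [ker_transpose] at h
  have h2 : ((Mmat E)ᵀ).rank = (Mmat E).rank := Matrix.rank_transpose _
  have h3 : ((Mmat E)ᵀ).rank
      = Module.finrank ℝ (LinearMap.range ((Mmat E)ᵀ).mulVecLin) := rfl
  have h4 : Module.finrank ℝ ((V ⊕ V) → ℝ) = 2 * Fintype.card V := by
    rw [Module.finrank_pi, Fintype.card_sum]; ring
  omega

noncomputable def psiMap (S : Finset (V × V)) : suppSub S →ₗ[ℝ] ((V ⊕ V) → ℝ) :=
  ((Mmat S).mulVecLin).comp (suppSub S).subtype

lemma range_psiMap (S : Finset (V × V)) :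
    LinearMap.range (psiMap S) = LinearMap.range (Mmat S).mulVecLin := by
  apply le_antisymm (LinearMap.range_comp_le_range _ _)
  rintro w ⟨x, rfl⟩
  refine ⟨⟨fun e => if e ∈ S then x e else 0, fun e he => if_neg he⟩, ?_⟩
  show (Mmat S).mulVec _ = (Mmat S).mulVec x
  funext u
  rw [Matrix.mulVec, Matrix.mulVec, dotProduct, dotProduct]
  refine Finset.sum_congr rfl fun e _ => ?_
  by_cases he : e ∈ S
  · simp [he]
  · have h0 : Mmat S u e = 0 := by unfold Mmat; simp [he]
    simp [h0, he]

lemma finrank_ker_psi (S : Finset (V × V)) :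
    Module.finrank ℝ (LinearMap.range (psiMap S))
      + Module.finrank ℝ ↥(suppSub S ⊓ LinearMap.ker (Mmat S).mulVecLin) = S.card := by
  have h := LinearMap.finrank_range_add_finrank_ker (psiMap S)
  rw [finrank_suppSub] at h
  have hker : LinearMap.ker (psiMap S)
      = Submodule.comap (suppSub S).subtype
          (suppSub S ⊓ LinearMap.ker (Mmat S).mulVecLin) := by
    ext x
    simp only [psiMap, LinearMap.mem_ker, LinearMap.comp_apply, Submodule.mem_comap,
      Submodule.subtype_apply, Submodule.mem_inf]
    exact ⟨fun hx => ⟨x.2, hx⟩, fun hx => hx.2⟩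
  rw [hker] at h
  have heq : Module.finrank ℝ
        ↥(Submodule.comap (suppSub S).subtype (suppSub S ⊓ LinearMap.ker (Mmat S).mulVecLin))
      = Module.finrank ℝ ↥(suppSub S ⊓ LinearMap.ker (Mmat S).mulVecLin) :=
    (Submodule.comapSubtypeEquivOfLe inf_le_left).finrank_eq
  omega

lemma exists_ker_vec {S : Finset (V × V)} (h : (Mmat S).rank < S.card) :
    ∃ y : V × V → ℝ, y ≠ 0 ∧ (∀ e ∉ S, y e = 0) ∧ (Mmat S).mulVec y = 0 := by
  have h1 := finrank_ker_psi S
  rw [range_psiMap] at h1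
  have h2 : (Mmat S).rank = Module.finrank ℝ (LinearMap.range (Mmat S).mulVecLin) := rfl
  have h3 : 0 < Module.finrank ℝ ↥(suppSub S ⊓ LinearMap.ker (Mmat S).mulVecLin) := by omega
  have h4 : suppSub S ⊓ LinearMap.ker (Mmat S).mulVecLin ≠ ⊥ := by
    intro hbot
    rw [hbot] at h3
    simp at h3
  obtain ⟨y, hy, hy0⟩ := Submodule.exists_mem_ne_zero_of_ne_bot h4
  rw [Submodule.mem_inf] at hy
  exact ⟨y, hy0, hy.1, hy.2⟩

lemma rank_lt_card_T (F : Finset (V × V)) (hF : F.Nonempty) :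
    (Mmat F).rank + 1 ≤
      ((F.image (fun e => (Sum.inl e.1 : V ⊕ V))) ∪ (F.image (fun e => Sum.inr e.2))).card := by
  set T : Finset (V ⊕ V) :=
    (F.image (fun e => (Sum.inl e.1 : V ⊕ V))) ∪ (F.image (fun e => Sum.inr e.2)) with hT
  have hZ : suppSub Tᶜ ≤ Yd F := by
    intro y hy e he
    have h1 : (Sum.inl e.1 : V ⊕ V) ∈ T := by
      rw [hT]; exact Finset.mem_union_left _ (Finset.mem_image_of_mem _ he)
    have h2 : (Sum.inr e.2 : V ⊕ V) ∈ T := by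
      rw [hT]; exact Finset.mem_union_right _ (Finset.mem_image_of_mem _ he)
    rw [hy _ (by simp [h1]), hy _ (by simp [h2]), add_zero]
  have hsgn : (sgn : V ⊕ V → ℝ) ∈ Yd F := by
    intro e he; simp [sgn]
  have hsgnZ : (sgn : V ⊕ V → ℝ) ∉ suppSub Tᶜ := by
    intro hcon
    obtain ⟨e, he⟩ := hF
    have h1 : (Sum.inl e.1 : V ⊕ V) ∈ T := by
      rw [hT]; exact Finset.mem_union_left _ (Finset.mem_image_of_mem _ he)
    have := hcon (Sum.inl e.1) (by simp [h1])
    simp [sgn] at this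
  have hle : suppSub Tᶜ ⊔ Submodule.span ℝ {(sgn : V ⊕ V → ℝ)} ≤ Yd F := by
    refine sup_le hZ ?_
    rw [Submodule.span_le, Set.singleton_subset_iff]
    exact hsgn
  have hlt : suppSub Tᶜ < suppSub Tᶜ ⊔ Submodule.span ℝ {(sgn : V ⊕ V → ℝ)} := by
    refine lt_of_le_of_ne le_sup_left ?_
    intro heq
    apply hsgnZ
    rw [heq]
    exact Submodule.mem_sup_right (Submodule.mem_span_singleton_self _)
  have h5 := Submodule.finrank_lt_finrank_of_lt hlt
  have h6 := Submodule.finrank_mono hle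
  have h7 := rank_Mmat_add F
  have h8 : Tᶜ.card + T.card = 2 * Fintype.card V := by
    rw [Finset.card_compl_add_card, Fintype.card_sum]; ring
  rw [finrank_suppSub] at h5
  omega

lemma mulVec_of_mem_PD {E : Finset (V × V)} {x : V × V → ℝ} (hx : x ∈ PD E) :
    (Mmat E).mulVec x = fun _ => 1 := by
  funext u
  cases u with
  | inl v => rw [mulVec_inl]; exact hx.2.2.1 v
  | inr v => rw [mulVec_inr]; exact hx.2.2.2 v

lemma convex_PD (E : Finset (V × V)) : Convex ℝ (PD E) := by
  intro x hx y hy a b ha hb hab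
  refine ⟨fun e he => ?_, fun e => ?_, fun v => ?_, fun v => ?_⟩
  · simp [hx.1 e he, hy.1 e he]
  · have h1 := hx.2.1 e; have h2 := hy.2.1 e
    simp only [Pi.add_apply, Pi.smul_apply, smul_eq_mul]
    exact add_nonneg (mul_nonneg ha h1) (mul_nonneg hb h2)
  · simp only [Pi.add_apply, Pi.smul_apply, smul_eq_mul]
    rw [Finset.sum_add_distrib, ← Finset.mul_sum, ← Finset.mul_sum, hx.2.2.1 v, hy.2.2.1 v]
    simpa using hab
  · simp only [Pi.add_apply, Pi.smul_apply, smul_eq_mul]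
    rw [Finset.sum_add_distrib, ← Finset.mul_sum, ← Finset.mul_sum, hx.2.2.2 v, hy.2.2.2 v]
    simpa using hab

lemma single_mem_PD {E : Finset (V × V)} {L : V × V → ℕ} {r : ℕ} (hM : IsMagicD E L r)
    (hr : 0 < r) : (fun e => (L e : ℝ) / r) ∈ PD E := by
  have hr' : (r : ℝ) ≠ 0 := Nat.cast_ne_zero.2 hr.ne'
  refine ⟨fun e he => by simp [hM.1 e he], fun e => by positivity, fun v => ?_, fun v => ?_⟩
  · rw [← Finset.sum_div]
    rw [show (∑ e ∈ E with e.1 = v, (L e : ℝ)) = ((∑ e ∈ E with e.1 = v, L e : ℕ) : ℝ) by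
      push_cast; rfl]
    rw [hM.2.1 v, div_self hr']
  · rw [← Finset.sum_div]
    rw [show (∑ e ∈ E with e.2 = v, (L e : ℝ)) = ((∑ e ∈ E with e.2 = v, L e : ℕ) : ℝ) by
      push_cast; rfl]
    rw [hM.2.2 v, div_self hr']

lemma magic_r_pos {E : Finset (V × V)} {L : V × V → ℕ} {r : ℕ} {e : V × V}
    (hM : IsMagicD E L r) (he : e ∈ E) (hL : 0 < L e) : 0 < r := by
  have hmem : e ∈ E.filter (fun e' => e'.1 = e.1) := Finset.mem_filter.2 ⟨he, rfl⟩
  have := Finset.single_le_sum (f := L) (fun _ _ => Nat.zero_le _) hmem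
  rw [hM.2.1 e.1] at this
  omega

lemma exists_interior {E : Finset (V × V)} (hpos : IsPositiveD E) (hne : E.Nonempty) :
    ∃ p ∈ PD E, ∀ e ∈ E, 0 < p e := by
  classical
  choose L r hM hL using hpos
  set z : V × V → (V × V → ℝ) := fun e =>
    if h : e ∈ E then (fun e' => (L e h e' : ℝ) / (r e h)) else 0 with hz
  have hzPD : ∀ e ∈ E, z e ∈ PD E := by
    intro e he
    rw [hz]; simp only [dif_pos he]
    exact single_mem_PD (hM e he) (magic_r_pos (hM e he) he (hL e he))
  have hcard : (0 : ℝ) < E.card := by exact_mod_cast Finset.card_pos.2 hne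
  set w : V × V → ℝ := fun _ => (E.card : ℝ)⁻¹ with hw
  have hw1 : ∑ e ∈ E, w e = 1 := by
    rw [hw]; simp only [Finset.sum_const, nsmul_eq_mul]
    field_simp
  have hp : (∑ e ∈ E, w e • z e) ∈ PD E :=
    (convex_PD E).sum_mem (fun e _ => by positivity) hw1 hzPD
  refine ⟨∑ e ∈ E, w e • z e, hp, fun e he => ?_⟩
  rw [Finset.sum_apply]
  refine Finset.sum_pos' (fun e' he' => ?_) ⟨e, he, ?_⟩
  · have := (hzPD e' he').2.1 e
    simp only [Pi.smul_apply, smul_eq_mul]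
    positivity
  · simp only [Pi.smul_apply, smul_eq_mul]
    have hzpos : 0 < z e e := by
      rw [hz]; simp only [dif_pos he]
      have h0 := magic_r_pos (hM e he) he (hL e he)
      have h1 : (0:ℝ) < L e he e := by exact_mod_cast hL e he
      have h2 : (0:ℝ) < r e he := by exact_mod_cast h0
      positivity
    positivity

lemma vectorSpan_PD {E : Finset (V × V)} (hpos : IsPositiveD E) (hne : E.Nonempty) :
    vectorSpan ℝ (PD E) = suppSub E ⊓ LinearMap.ker (Mmat E).mulVecLin := by
  apply le_antisymm
  · rw [vectorSpan_def, Submodule.span_le]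
    rintro w hw
    rw [Set.mem_vsub] at hw
    obtain ⟨p, hp, q, hq, rfl⟩ := hw
    rw [SetLike.mem_coe, Submodule.mem_inf]
    constructor
    · intro e he
      show p e - q e = 0
      rw [hp.1 e he, hq.1 e he, sub_zero]
    · rw [LinearMap.mem_ker]
      show (Mmat E).mulVecLin (p - q) = 0
      rw [map_sub, Matrix.mulVecLin_apply, Matrix.mulVecLin_apply,
        mulVec_of_mem_PD hp, mulVec_of_mem_PD hq, sub_self]
  · intro k hk
    obtain ⟨hksupp, hkker⟩ := Submodule.mem_inf.1 hk
    obtain ⟨p, hp, hppos⟩ := exists_interior hpos hne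
    by_cases hk0 : k = 0
    · rw [hk0]; exact Submodule.zero_mem _
    have hmvk : (Mmat E).mulVec k = 0 := by
      have h0 := LinearMap.mem_ker.1 hkker
      rwa [Matrix.mulVecLin_apply] at h0
    have hkv1 : ∀ v : V, ∑ e ∈ E with e.1 = v, k e = 0 := by
      intro v
      have h := congrFun hmvk (Sum.inl v)
      rwa [mulVec_inl] at h
    have hkv2 : ∀ v : V, ∑ e ∈ E with e.2 = v, k e = 0 := by
      intro v
      have h := congrFun hmvk (Sum.inr v)
      rwa [mulVec_inr] at h
    set B := ∑ e : V × V, |k e| with hB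
    have hBnn : 0 ≤ B := Finset.sum_nonneg fun e _ => abs_nonneg _
    have hBk : ∀ e, |k e| ≤ B := fun e =>
      Finset.single_le_sum (fun e _ => abs_nonneg (k e)) (Finset.mem_univ e)
    set δ := E.inf' hne p with hδdef
    have hδpos : 0 < δ := (Finset.lt_inf'_iff hne).2 hppos
    have hδle : ∀ e ∈ E, δ ≤ p e := fun e he => Finset.inf'_le _ he
    set ε := δ / (B + 1) with hε
    have hεpos : 0 < ε := div_pos hδpos (by linarith)
    have hkey : ∀ e, ε * |k e| ≤ δ := by
      intro e
      rw [hε, div_mul_eq_mul_div, div_le_iff₀ (by linarith)]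
      have h1 := hBk e
      nlinarith [abs_nonneg (k e)]
    have hq : p + ε • k ∈ PD E := by
      refine ⟨fun e he => ?_, fun e => ?_, fun v => ?_, fun v => ?_⟩
      · simp [hp.1 e he, hksupp e he]
      · by_cases he : e ∈ E
        · have h1 := hδle e he
          have h2 := hkey e
          have h3 : -|k e| ≤ k e := neg_abs_le _
          simp only [Pi.add_apply, Pi.smul_apply, smul_eq_mul]
          nlinarith [hεpos.le]
        · simp [hp.1 e he, hksupp e he]
      · simp only [Pi.add_apply, Pi.smul_apply, smul_eq_mul]
        rw [Finset.sum_add_distrib, ← Finset.mul_sum, hkv1 v, hp.2.2.1 v, mul_zero, add_zero]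
      · simp only [Pi.add_apply, Pi.smul_apply, smul_eq_mul]
        rw [Finset.sum_add_distrib, ← Finset.mul_sum, hkv2 v, hp.2.2.2 v, mul_zero, add_zero]
    have hkk : k = ε⁻¹ • ((p + ε • k) -ᵥ p) := by
      have : (p + ε • k) -ᵥ p = ε • k := by
        show p + ε • k - p = ε • k
        abel
      rw [this, smul_smul, inv_mul_cancel₀ hεpos.ne', one_smul]
    rw [hkk]
    exact Submodule.smul_mem _ _ (vsub_mem_vectorSpan ℝ hq hp)

/-- Let `D` be a positive digraph with at least one edge, `n` vertices and `q` edges.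
Then `P_D` is an integral polytope (every vertex, i.e. extreme point, has integer
coordinates) of dimension `q - 2n + b`, where `b` is the number of connected components
of the associated bipartite graph `G_D` (the dimension identity is stated additively
to avoid natural subtraction). -/
theorem PD_integral_and_dimension (E : Finset (V × V)) (hpos : IsPositiveD E)
    (hne : E.Nonempty) :
    (∀ x ∈ Set.extremePoints ℝ (PD E), ∀ e : V × V, ∃ z : ℤ, x e = (z : ℝ)) ∧
    Module.finrank ℝ (affineSpan ℝ (PD E)).direction + 2 * Fintype.card V =
      E.card + Nat.card (compGraphGD E).ConnectedComponent := by
  classical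
  constructor
  · -- Integrality of extreme points
    rintro x ⟨hxPD, hxext⟩ e0
    by_contra hcon
    set F := E.filter (fun e => ¬∃ z : ℤ, x e = (z : ℝ)) with hF
    have he0E : e0 ∈ E := by
      by_contra h
      exact hcon ⟨0, by simp [hxPD.1 e0 h]⟩
    have hFne : F.Nonempty := ⟨e0, Finset.mem_filter.2 ⟨he0E, hcon⟩⟩
    -- every out-fiber of F has at least 2 elements
    have hfib1 : ∀ v ∈ F.image (fun e => e.1), 2 ≤ (F.filter (fun e => e.1 = v)).card := by
      intro v hv
      obtain ⟨e, heF, hev⟩ := Finset.mem_image.1 hv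
      have heFv : e ∈ F.filter (fun e' => e'.1 = v) := Finset.mem_filter.2 ⟨heF, hev⟩
      by_contra hlt
      push_neg at hlt
      have hsingle : F.filter (fun e' => e'.1 = v) = {e} := by
        refine Finset.eq_singleton_iff_unique_mem.2 ⟨heFv, fun e' he' => ?_⟩
        exact Finset.card_le_one.1 (by omega) e' he' e heFv
      have heE := (Finset.mem_filter.1 heF).1
      have hnotint := (Finset.mem_filter.1 heF).2
      set s := (E.filter (fun e' => e'.1 = v)).erase e with hs
      have hint : ∀ e' ∈ s, ∃ z : ℤ, x e' = (z : ℝ) := by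
        intro e' he'
        obtain ⟨hne', he'mem⟩ := Finset.mem_erase.1 he'
        by_contra hno
        have : e' ∈ F.filter (fun e'' => e''.1 = v) :=
          Finset.mem_filter.2 ⟨Finset.mem_filter.2 ⟨(Finset.mem_filter.1 he'mem).1, hno⟩,
            (Finset.mem_filter.1 he'mem).2⟩
        rw [hsingle] at this
        exact hne' (Finset.mem_singleton.1 this)
      set g : V × V → ℤ := fun e' => if h : ∃ z : ℤ, x e' = (z : ℝ) then h.choose else 0 with hg
      have hgx : ∀ e' ∈ s, x e' = (g e' : ℝ) := by
        intro e' he'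
        have h := hint e' he'
        rw [hg]; simp only [dif_pos h]; exact h.choose_spec
      have hesum : x e + ∑ e' ∈ s, x e' = 1 := by
        rw [hs, Finset.add_sum_erase _ _ (Finset.mem_filter.2 ⟨heE, hev⟩)]
        exact hxPD.2.2.1 v
      apply hnotint
      refine ⟨1 - ∑ e' ∈ s, g e', ?_⟩
      rw [Finset.sum_congr rfl hgx] at hesum
      push_cast
      linarith
    have hfib2 : ∀ v ∈ F.image (fun e => e.2), 2 ≤ (F.filter (fun e => e.2 = v)).card := by
      intro v hv
      obtain ⟨e, heF, hev⟩ := Finset.mem_image.1 hv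
      have heFv : e ∈ F.filter (fun e' => e'.2 = v) := Finset.mem_filter.2 ⟨heF, hev⟩
      by_contra hlt
      push_neg at hlt
      have hsingle : F.filter (fun e' => e'.2 = v) = {e} := by
        refine Finset.eq_singleton_iff_unique_mem.2 ⟨heFv, fun e' he' => ?_⟩
        exact Finset.card_le_one.1 (by omega) e' he' e heFv
      have heE := (Finset.mem_filter.1 heF).1
      have hnotint := (Finset.mem_filter.1 heF).2
      set s := (E.filter (fun e' => e'.2 = v)).erase e with hs
      have hint : ∀ e' ∈ s, ∃ z : ℤ, x e' = (z : ℝ) := by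
        intro e' he'
        obtain ⟨hne', he'mem⟩ := Finset.mem_erase.1 he'
        by_contra hno
        have : e' ∈ F.filter (fun e'' => e''.2 = v) :=
          Finset.mem_filter.2 ⟨Finset.mem_filter.2 ⟨(Finset.mem_filter.1 he'mem).1, hno⟩,
            (Finset.mem_filter.1 he'mem).2⟩
        rw [hsingle] at this
        exact hne' (Finset.mem_singleton.1 this)
      set g : V × V → ℤ := fun e' => if h : ∃ z : ℤ, x e' = (z : ℝ) then h.choose else 0 with hg
      have hgx : ∀ e' ∈ s, x e' = (g e' : ℝ) := by
        intro e' he'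
        have h := hint e' he'
        rw [hg]; simp only [dif_pos h]; exact h.choose_spec
      have hesum : x e + ∑ e' ∈ s, x e' = 1 := by
        rw [hs, Finset.add_sum_erase _ _ (Finset.mem_filter.2 ⟨heE, hev⟩)]
        exact hxPD.2.2.2 v
      apply hnotint
      refine ⟨1 - ∑ e' ∈ s, g e', ?_⟩
      rw [Finset.sum_congr rfl hgx] at hesum
      push_cast
      linarith
    -- counting
    have hcard1 : 2 * (F.image (fun e => e.1)).card ≤ F.card := by
      rw [Finset.card_eq_sum_card_image (fun e => e.1) F]
      calc 2 * (F.image (fun e => e.1)).card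
          = ∑ _v ∈ F.image (fun e => e.1), 2 := by
            rw [Finset.sum_const, smul_eq_mul, mul_comm]
        _ ≤ ∑ v ∈ F.image (fun e => e.1), (F.filter (fun e => e.1 = v)).card :=
            Finset.sum_le_sum hfib1
    have hcard2 : 2 * (F.image (fun e => e.2)).card ≤ F.card := by
      rw [Finset.card_eq_sum_card_image (fun e => e.2) F]
      calc 2 * (F.image (fun e => e.2)).card
          = ∑ _v ∈ F.image (fun e => e.2), 2 := by
            rw [Finset.sum_const, smul_eq_mul, mul_comm]
        _ ≤ ∑ v ∈ F.image (fun e => e.2), (F.filter (fun e => e.2 = v)).card :=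
            Finset.sum_le_sum hfib2
    set T : Finset (V ⊕ V) :=
      (F.image (fun e => (Sum.inl e.1 : V ⊕ V))) ∪ (F.image (fun e => Sum.inr e.2)) with hT
    have hTcard : T.card ≤ F.card := by
      have hdisj : Disjoint (F.image (fun e => (Sum.inl e.1 : V ⊕ V)))
          (F.image (fun e => (Sum.inr e.2 : V ⊕ V))) := by
        rw [Finset.disjoint_left]
        intro a ha hb
        obtain ⟨e1, -, rfl⟩ := Finset.mem_image.1 ha
        obtain ⟨e2, -, h⟩ := Finset.mem_image.1 hb
        simp at h
      have h1 : (F.image (fun e => (Sum.inl e.1 : V ⊕ V))).card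
          = (F.image (fun e => e.1)).card := by
        rw [show (F.image (fun e => (Sum.inl e.1 : V ⊕ V)))
            = (F.image (fun e => e.1)).image Sum.inl from (Finset.image_image).symm,
          Finset.card_image_of_injective _ Sum.inl_injective]
      have h2 : (F.image (fun e => (Sum.inr e.2 : V ⊕ V))).card
          = (F.image (fun e => e.2)).card := by
        rw [show (F.image (fun e => (Sum.inr e.2 : V ⊕ V)))
            = (F.image (fun e => e.2)).image Sum.inr from (Finset.image_image).symm,
          Finset.card_image_of_injective _ Sum.inr_injective]
      rw [hT, Finset.card_union_of_disjoint hdisj, h1, h2]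
      omega
    have hrank := rank_lt_card_T F hFne
    rw [← hT] at hrank
    obtain ⟨y, hy0, hysupp, hyker⟩ := exists_ker_vec (S := F) (by omega)
    -- perturbation
    have hyE : ∀ e ∉ E, y e = 0 := fun e he =>
      hysupp e (fun hF' => he (Finset.filter_subset _ E hF'))
    have hmv : (Mmat E).mulVec y = 0 := by
      rw [mulVec_congr_support (Finset.filter_subset _ E) y hysupp]
      exact hyker
    have hsum1 : ∀ v : V, ∑ e ∈ E with e.1 = v, y e = 0 := by
      intro v
      have h := congrFun hmv (Sum.inl v)
      rwa [mulVec_inl] at h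
    have hsum2 : ∀ v : V, ∑ e ∈ E with e.2 = v, y e = 0 := by
      intro v
      have h := congrFun hmv (Sum.inr v)
      rwa [mulVec_inr] at h
    have hxFpos : ∀ e ∈ F, 0 < x e := by
      intro e he
      rcases (hxPD.2.1 e).lt_or_eq with h | h
      · exact h
      · exact absurd ⟨0, by simp [← h]⟩ (Finset.mem_filter.1 he).2
    set B := ∑ e : V × V, |y e| with hB
    have hBnn : 0 ≤ B := Finset.sum_nonneg fun e _ => abs_nonneg _
    have hBy : ∀ e, |y e| ≤ B := fun e =>
      Finset.single_le_sum (fun e _ => abs_nonneg (y e)) (Finset.mem_univ e)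
    set δ := F.inf' hFne x with hδdef
    have hδpos : 0 < δ := (Finset.lt_inf'_iff hFne).2 hxFpos
    have hδle : ∀ e ∈ F, δ ≤ x e := fun e he => Finset.inf'_le _ he
    set ε := δ / (B + 1) with hε
    have hεpos : 0 < ε := div_pos hδpos (by linarith)
    have hkey : ∀ e, ε * |y e| ≤ δ := by
      intro e
      rw [hε, div_mul_eq_mul_div, div_le_iff₀ (by linarith)]
      have h1 := hBy e
      nlinarith [abs_nonneg (y e)]
    have hmem : ∀ t : ℝ, |t| ≤ ε → x + t • y ∈ PD E := by
      intro t ht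
      have htabs : ∀ e, |t * y e| ≤ δ := by
        intro e
        rw [abs_mul]
        calc |t| * |y e| ≤ ε * |y e| := by
              apply mul_le_mul_of_nonneg_right ht (abs_nonneg _)
          _ ≤ δ := hkey e
      refine ⟨fun e he => ?_, fun e => ?_, fun v => ?_, fun v => ?_⟩
      · simp [hxPD.1 e he, hyE e he]
      · by_cases heF : e ∈ F
        · have h1 := hδle e heF
          have h2 := htabs e
          have h3 : -|t * y e| ≤ t * y e := neg_abs_le _
          simp only [Pi.add_apply, Pi.smul_apply, smul_eq_mul]
          linarith
        · simp only [Pi.add_apply, Pi.smul_apply, smul_eq_mul]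
          rw [hysupp e heF, mul_zero, add_zero]
          exact hxPD.2.1 e
      · simp only [Pi.add_apply, Pi.smul_apply, smul_eq_mul]
        rw [Finset.sum_add_distrib, ← Finset.mul_sum, hsum1 v, hxPD.2.2.1 v, mul_zero, add_zero]
      · simp only [Pi.add_apply, Pi.smul_apply, smul_eq_mul]
        rw [Finset.sum_add_distrib, ← Finset.mul_sum, hsum2 v, hxPD.2.2.2 v, mul_zero, add_zero]
    have h1 : x - ε • y ∈ PD E := by
      have h := hmem (-ε) (by rw [abs_neg, abs_of_pos hεpos])
      rwa [neg_smul, ← sub_eq_add_neg] at h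
    have h2 : x + ε • y ∈ PD E := hmem ε (le_of_eq (abs_of_pos hεpos))
    have hopen : x ∈ openSegment ℝ (x - ε • y) (x + ε • y) :=
      ⟨1/2, 1/2, by norm_num, by norm_num, by norm_num, by module⟩
    have heq := hxext h1 h2 hopen
    have hzero : ε • y = 0 := by
      have := sub_eq_self.1 heq
      exact this
    rcases smul_eq_zero.1 hzero with h | h
    · exact absurd h hεpos.ne'
    · exact hy0 h
  · -- dimension
    rw [direction_affineSpan, vectorSpan_PD hpos hne]
    have h1 := finrank_ker_psi E
    rw [range_psiMap] at h1
    have h2 : (Mmat E).rank = Module.finrank ℝ (LinearMap.range (Mmat E).mulVecLin) := rfl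
    have h3 := rank_Mmat_add E
    have h4 := finrank_Yd E
    omega
end

section
/- For every vertex v of the polytope P_G of magic labelings of a finite graph G, the labeling 2v assigns a nonnegative integer to each edge of G; that is, every vertex of P_G is one half of an integral magic labeling of G of magic sum 2. -/
open Finset

variable {V : Type*} [Fintype V] [DecidableEq V]

/-- A magic labeling of the finite graph with vertex set `V` and edge set `E`
(loops allowed), of magic sum `r`: for each vertex `v` the sum of the labels of
all edges incident to `v` (a loop counted once) equals `r`. -/
def IsMagic (E : Finset (Sym2 V)) (L : Sym2 V → ℕ) (r : ℕ) : Prop :=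
  (∀ e, e ∉ E → L e = 0) ∧ ∀ v : V, ∑ e ∈ E with v ∈ e, L e = r

/-- The polytope `P_G` of magic labelings of the graph with edge set `E`. -/
def PG (E : Finset (Sym2 V)) : Set (Sym2 V → ℝ) :=
  {x | (∀ e, e ∉ E → x e = 0) ∧ (∀ e, 0 ≤ x e) ∧ ∀ v : V, ∑ e ∈ E with v ∈ e, x e = 1}

/-- Summing a function over all edges incident to `v` equals summing over the
other endpoint. -/
lemma sum_incid_aux (y : Sym2 V → ℝ) (v : V) :
    ∑ u, y s(v, u) = ∑ e ∈ univ with v ∈ e, y e := by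
  have himg : univ.image (fun u => s(v, u)) = univ.filter (fun e => v ∈ e) := by
    ext e
    simp only [mem_image, mem_univ, true_and, mem_filter, Sym2.mem_iff_exists]
    exact ⟨fun ⟨u, hu⟩ => ⟨u, hu.symm⟩, fun ⟨u, hu⟩ => ⟨u, hu.symm⟩⟩
  rw [← himg, Finset.sum_image (fun a _ b _ h => Sym2.congr_right.1 h)]

/-- For a function vanishing off `E`, the incidence sum over `E` equals the sum
over the other endpoint. -/
lemma sum_incid (E : Finset (Sym2 V)) (y : Sym2 V → ℝ) (h0 : ∀ e, e ∉ E → y e = 0)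
    (v : V) : ∑ e ∈ E with v ∈ e, y e = ∑ u, y s(v, u) := by
  rw [sum_incid_aux]
  refine Finset.sum_subset (Finset.filter_subset_filter _ (subset_univ E)) ?_
  intro e he hne
  refine h0 e fun heE => hne ?_
  exact mem_filter.2 ⟨heE, (mem_filter.1 he).2⟩

omit [Fintype V] in
lemma convex_PG (E : Finset (Sym2 V)) : Convex ℝ (PG E) := by
  rintro y ⟨hy0, hynn, hys⟩ z ⟨hz0, hznn, hzs⟩ a b ha hb hab
  refine ⟨fun e he => ?_, fun e => ?_, fun v => ?_⟩
  · simp [Pi.add_apply, Pi.smul_apply, hy0 e he, hz0 e he]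
  · have := hynn e; have := hznn e
    simp only [Pi.add_apply, Pi.smul_apply, smul_eq_mul]
    positivity
  · simp only [Pi.add_apply, Pi.smul_apply, smul_eq_mul]
    rw [Finset.sum_add_distrib, ← Finset.mul_sum, ← Finset.mul_sum, hys v, hzs v]
    simpa using hab

/-- Every vertex (extreme point) `x` of the polytope `P_G` of magic labelings of a
finite graph `G` is one half of an integral magic labeling of `G` of magic sum `2`:
`2 • x` assigns a nonnegative integer to each edge. -/
theorem PG_vertices_half_integral (E : Finset (Sym2 V)) (x : Sym2 V → ℝ)
    (hx : x ∈ Set.extremePoints ℝ (PG E)) :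
    ∃ L : Sym2 V → ℕ, IsMagic E L 2 ∧ ∀ e : Sym2 V, x e = (L e : ℝ) / 2 := by
  obtain ⟨hxmem, hxext⟩ := hx
  obtain ⟨hx0, hxnn, hxsum⟩ := hxmem
  -- the associated doubly stochastic matrix
  set M : Matrix V V ℝ := Matrix.of fun u w => x s(u, w) with hMdef
  have hMsymm : ∀ u w, M u w = M w u := fun u w => by
    simp only [hMdef, Matrix.of_apply]; rw [Sym2.eq_swap]
  have hMrow : ∀ u, ∑ w, M u w = 1 := fun u => by
    have := sum_incid E x hx0 u
    simp only [hMdef, Matrix.of_apply]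
    rw [← this, hxsum u]
  have hMds : M ∈ doublyStochastic ℝ V := by
    rw [mem_doublyStochastic_iff_sum]
    refine ⟨fun i j => hxnn _, hMrow, fun j => ?_⟩
    rw [← hMrow j]
    exact Finset.sum_congr rfl fun i _ => hMsymm i j
  obtain ⟨w, hw0, hw1, hwM⟩ := exists_eq_sum_perm_of_mem_doublyStochastic hMds
  -- the projection of a permutation matrix back to a labeling
  set p : Equiv.Perm V → Sym2 V → ℝ := fun σ =>
    Sym2.lift ⟨fun u v => (σ.permMatrix ℝ u v + σ.permMatrix ℝ v u) / 2,
      fun a b => by dsimp only; rw [add_comm]⟩ with hpdef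
  have hpval : ∀ σ a b, p σ s(a, b) = (σ.permMatrix ℝ a b + σ.permMatrix ℝ b a) / 2 :=
    fun σ a b => rfl
  have hPent : ∀ (σ : Equiv.Perm V) a b, σ.permMatrix ℝ a b = if σ a = b then 1 else 0 :=
    fun σ a b => by simp [PEquiv.toMatrix_apply, Equiv.toPEquiv_apply]
  have hpnn : ∀ σ e, 0 ≤ p σ e := by
    intro σ e
    induction e using Sym2.ind with
    | _ a b =>
      rw [hpval, hPent, hPent]
      positivity
  -- x is the convex combination of the p σ
  have hpx : ∀ e, x e = ∑ σ, w σ * p σ e := by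
    intro e
    induction e using Sym2.ind with
    | _ a b =>
      have hab : M a b = ∑ σ, w σ * σ.permMatrix ℝ a b := by
        rw [← hwM]; simp [Matrix.sum_apply]
      have hba : M b a = ∑ σ, w σ * σ.permMatrix ℝ b a := by
        rw [← hwM]; simp [Matrix.sum_apply]
      have hxab : x s(a, b) = (M a b + M b a) / 2 := by
        rw [hMsymm b a]
        simp only [hMdef, Matrix.of_apply]
        ring
      rw [hxab, hab, hba, ← Finset.sum_add_distrib, Finset.sum_div]
      refine Finset.sum_congr rfl fun σ _ => ?_
      rw [hpval]; ring
  -- positive-weight projections vanish off E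
  have hp0 : ∀ σ, 0 < w σ → ∀ e, e ∉ E → p σ e = 0 := by
    intro σ hσ e he
    have h0 : ∑ σ', w σ' * p σ' e = 0 := by rw [← hpx]; exact hx0 e he
    have := (Finset.sum_eq_zero_iff_of_nonneg
      (fun σ' _ => mul_nonneg (hw0 σ') (hpnn σ' e))).1 h0 σ (mem_univ σ)
    exact (mul_eq_zero.1 this).resolve_left hσ.ne'
  -- positive-weight projections lie in the polytope
  have hpPG : ∀ σ, 0 < w σ → p σ ∈ PG E := by
    intro σ hσ
    refine ⟨hp0 σ hσ, hpnn σ, fun v => ?_⟩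
    rw [sum_incid E _ (hp0 σ hσ) v]
    rw [Finset.sum_congr rfl fun u _ => hpval σ v u, ← Finset.sum_div,
      Finset.sum_add_distrib,
      sum_row_of_mem_doublyStochastic (permMatrix_mem_doublyStochastic) v,
      sum_col_of_mem_doublyStochastic (permMatrix_mem_doublyStochastic) v]
    norm_num
  -- pick a permutation with positive weight
  set t : Finset (Equiv.Perm V) := univ.filter (fun σ => 0 < w σ) with htdef
  have htsum : ∀ (f : Equiv.Perm V → ℝ), (∑ σ ∈ t, w σ * f σ) = ∑ σ, w σ * f σ := by
    intro f
    refine Finset.sum_subset (subset_univ t) fun σ _ hσ => ?_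
    have h1 : ¬ 0 < w σ := fun h => hσ (mem_filter.2 ⟨mem_univ σ, h⟩)
    have h2 : w σ = 0 := le_antisymm (not_lt.1 h1) (hw0 σ)
    rw [h2, zero_mul]
  have hwt : ∑ σ ∈ t, w σ = 1 := by
    rw [← hw1]
    refine Finset.sum_subset (subset_univ t) fun σ _ hσ => ?_
    have : ¬ 0 < w σ := fun h => hσ (mem_filter.2 ⟨mem_univ σ, h⟩)
    linarith [hw0 σ]
  have htne : t.Nonempty := by
    rcases t.eq_empty_or_nonempty with h | h
    · rw [h] at hwt; simp at hwt
    · exact h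
  obtain ⟨σ₀, hσ₀t⟩ := htne
  have hwσ₀ : 0 < w σ₀ := (mem_filter.1 hσ₀t).2
  have hwσ₀le : w σ₀ ≤ 1 := hwt ▸ Finset.single_le_sum (fun σ _ => hw0 σ) hσ₀t
  -- x equals p σ₀
  have hxp : x = p σ₀ := by
    rcases eq_or_lt_of_le hwσ₀le with heq | hlt
    · -- weight 1: all other weights vanish
      have hrest : ∑ σ ∈ univ.erase σ₀, w σ = 0 := by
        have := Finset.add_sum_erase univ w (mem_univ σ₀)
        rw [hw1, heq] at this
        linarith
      have hz : ∀ σ ∈ univ.erase σ₀, w σ = 0 :=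
        (Finset.sum_eq_zero_iff_of_nonneg (fun σ _ => hw0 σ)).1 hrest
      funext e
      rw [hpx e, ← Finset.add_sum_erase univ _ (mem_univ σ₀), heq, one_mul]
      rw [Finset.sum_eq_zero fun σ hσ => by rw [hz σ hσ, zero_mul], add_zero]
    · -- weight < 1: write x on an open segment
      have h1μ : (0:ℝ) < 1 - w σ₀ := by linarith
      set q : Sym2 V → ℝ := ∑ σ ∈ t.erase σ₀, ((1 - w σ₀)⁻¹ * w σ) • p σ with hqdef
      have hrest : ∑ σ ∈ t.erase σ₀, w σ = 1 - w σ₀ := by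
        have := Finset.add_sum_erase t w hσ₀t
        rw [hwt] at this
        linarith
      have hqPG : q ∈ PG E := by
        refine (convex_PG E).sum_mem
          (fun σ _ => mul_nonneg (inv_nonneg.2 h1μ.le) (hw0 σ)) ?_
          (fun σ hσ => hpPG σ (mem_filter.1 (Finset.mem_of_mem_erase hσ)).2)
        rw [← Finset.mul_sum, hrest, inv_mul_cancel₀ h1μ.ne']
      have hxcomb : w σ₀ • p σ₀ + (1 - w σ₀) • q = x := by
        rw [hqdef, Finset.smul_sum]
        have hsc : ∀ σ ∈ t.erase σ₀,
            (1 - w σ₀) • (((1 - w σ₀)⁻¹ * w σ) • p σ) = w σ • p σ := by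
          intro σ _
          rw [smul_smul, ← mul_assoc, mul_inv_cancel₀ h1μ.ne', one_mul]
        rw [Finset.sum_congr rfl hsc]
        funext e
        simp only [Pi.add_apply, Pi.smul_apply, smul_eq_mul, Finset.sum_apply]
        rw [hpx e, ← htsum (fun σ => p σ e)]
        exact (Finset.add_sum_erase t (fun σ => w σ * p σ e) hσ₀t)
      have hseg : x ∈ openSegment ℝ (p σ₀) q :=
        ⟨w σ₀, 1 - w σ₀, hwσ₀, h1μ, by ring, hxcomb⟩
      exact (hxext (hpPG σ₀ hwσ₀) hqPG hseg).symm
  -- build the integral labeling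
  set L : Sym2 V → ℕ := Sym2.lift ⟨fun u v =>
      (if σ₀ u = v then 1 else 0) + (if σ₀ v = u then 1 else 0),
      fun a b => by dsimp only; rw [add_comm]⟩ with hLdef
  have hLcast : ∀ e, (L e : ℝ) = 2 * x e := by
    intro e
    induction e using Sym2.ind with
    | _ a b =>
      rw [hxp, hpval, hLdef, Sym2.lift_mk]
      dsimp only
      rw [hPent, hPent]
      push_cast
      split_ifs <;> ring
  refine ⟨L, ⟨fun e he => ?_, fun v => ?_⟩, fun e => ?_⟩
  · have : (L e : ℝ) = 0 := by rw [hLcast e, hx0 e he, mul_zero]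
    exact_mod_cast this
  · have hcast : ((∑ e ∈ E with v ∈ e, L e : ℕ) : ℝ) = 2 := by
      push_cast
      rw [Finset.sum_congr rfl fun e _ => hLcast e, ← Finset.mul_sum, hxsum v]
      norm_num
    exact_mod_cast hcast
  · have := hLcast e
    linarith
end
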